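/- Let α > 1 and β > 0 with β > (α − 1)/(2α), and set b = min(β, 1). Define, for δ > 0, ℓ₁(δ) = −1/2 + δ(1 − b), ℓ₂(δ) = −δ b, ℓ₃(δ) = −1 + δ(3α + 1)/(2α), ℓ₄(δ) = −1/2 + δ(α + 1)/(2α), and m(δ) = max{ℓ₁(δ), ℓ₂(δ), ℓ₃(δ), ℓ₄(δ)}. Then for every δ > 0, m(δ) ≥ −αb/(2αb + α + 1), with equality if and only if δ = α/(2αb + α + 1). -/

import Mathlib

/-- Case 1 of Theorem 3 of the paper: for `α > 1`, `β > (α−1)/(2α)` and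
`b = β ∧ 1`, the maximum `m(δ)` of the four exponent lines is minimized exactly at
`δ = α/(2αb + α + 1)`, with minimal value `−αb/(2αb + α + 1)`. -/
theorem stmt12
    (α β : ℝ) (hα : 1 < α) (hβ : 0 < β) (h : (α - 1) / (2 * α) < β)
    (b : ℝ) (hb : b = min β 1) :
    ∀ δ : ℝ, 0 < δ →
      (-(α * b) / (2 * α * b + α + 1)
          ≤ max (max (-1 / 2 + δ * (1 - b)) (-(δ * b)))
              (max (-1 + δ * (3 * α + 1) / (2 * α)) (-1 / 2 + δ * (α + 1) / (2 * α)))) ∧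
      (max (max (-1 / 2 + δ * (1 - b)) (-(δ * b)))
              (max (-1 + δ * (3 * α + 1) / (2 * α)) (-1 / 2 + δ * (α + 1) / (2 * α)))
          = -(α * b) / (2 * α * b + α + 1)
        ↔ δ = α / (2 * α * b + α + 1)) := by
  have hα0 : (0:ℝ) < α := by linarith
  have hb0 : 0 < b := by
    rw [hb]
    exact lt_min hβ one_pos
  have hb1 : b ≤ 1 := by rw [hb]; exact min_le_right _ _
  have hbα : α - 1 < 2 * α * b := by
    have h1 : (α - 1) / (2 * α) < 1 := by
      rw [div_lt_one (by linarith)]; linarith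
    have : (α - 1) / (2 * α) < b := by
      rw [hb]; exact lt_min h h1
    have := (div_lt_iff₀ (by linarith : (0:ℝ) < 2 * α)).mp this
    linarith [this]
  set D : ℝ := 2 * α * b + α + 1 with hDdef
  have hD : 0 < D := by positivity
  have h2α : (0:ℝ) < 2 * α := by linarith
  intro δ hδ
  -- single-fraction rewrites
  have e4 : -1 / 2 + δ * (α + 1) / (2 * α) = (δ * (α + 1) - α) / (2 * α) := by
    field_simp; ring
  have e3 : -1 + δ * (3 * α + 1) / (2 * α) = (δ * (3 * α + 1) - 2 * α) / (2 * α) := by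
    field_simp; ring
  constructor
  · rcases le_total (δ * D) α with hc | hc
    · -- ℓ₂ is ≥ V
      have key : -(α * b) / D ≤ -(δ * b) := by
        rw [div_le_iff₀ hD]
        nlinarith [mul_le_mul_of_nonneg_left hc hb0.le]
      exact key.trans ((le_max_right _ _).trans (le_max_left _ _))
    · -- ℓ₄ is ≥ V
      have key : -(α * b) / D ≤ -1 / 2 + δ * (α + 1) / (2 * α) := by
        rw [e4, div_le_div_iff₀ hD h2α]
        nlinarith [mul_le_mul_of_nonneg_left hc (by linarith : (0:ℝ) ≤ α + 1)]
      exact key.trans ((le_max_right _ _).trans (le_max_right _ _))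
  · constructor
    · intro hmax
      have h2 : -(δ * b) ≤ -(α * b) / D :=
        hmax ▸ ((le_max_right _ _).trans (le_max_left _ _))
      have h4 : -1 / 2 + δ * (α + 1) / (2 * α) ≤ -(α * b) / D :=
        hmax ▸ ((le_max_right _ _).trans (le_max_right _ _))
      rw [le_div_iff₀ hD] at h2
      rw [e4, div_le_div_iff₀ h2α hD] at h4
      have hge : α ≤ δ * D := by nlinarith [hb0]
      have hle : δ * D ≤ α := by nlinarith
      rw [eq_div_iff hD.ne']
      linarith
    · intro hδeq
      subst hδeq
      have ht : α / D * D = α := div_mul_cancel₀ _ hD.ne'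
      have v2 : -(α / D * b) = -(α * b) / D := by field_simp
      have v4 : -1 / 2 + α / D * (α + 1) / (2 * α) = -(α * b) / D := by
        rw [e4, div_eq_div_iff h2α.ne' hD.ne']
        linear_combination (α + 1) * ht
      have v1 : -1 / 2 + α / D * (1 - b) ≤ -(α * b) / D := by
        rw [le_div_iff₀ hD]
        have expand : (-1 / 2 + α / D * (1 - b)) * D = -D / 2 + α * (1 - b) := by
          field_simp
        rw [expand]
        nlinarith
      have v3 : -1 + α / D * (3 * α + 1) / (2 * α) ≤ -(α * b) / D := by
        rw [le_div_iff₀ hD]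
        have expand : (-1 + α / D * (3 * α + 1) / (2 * α)) * D
            = -D + (3 * α + 1) / 2 := by
          field_simp
        rw [expand]
        nlinarith
      apply le_antisymm
      · apply max_le (max_le _ v2.le) (max_le v3 v4.le)
        exact v1
      · exact le_trans v2.ge ((le_max_right _ _).trans (le_max_left _ _))
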